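/- Let f : R^m → R be differentiable, strongly convex with parameter μ > 0, with ∇f Lipschitz continuous with constant L ≥ μ, and minimizer θ*. For step size η ∈ (0, 2/L), the gradient descent iterates θ^{t+1} = θ^t − η∇f(θ^t) satisfy ‖θ^{t+1} − θ*‖ ≤ ρ‖θ^t − θ*‖ where ρ = max{|1 − ημ|, |1 − ηL|} < 1, and hence θ^t → θ* as t → ∞. -/

import Mathlib

open RealInnerProductSpace Filter Topology


variable {E : Type*} [NormedAddCommGroup E] [InnerProductSpace ℝ E] [CompleteSpace E]

lemma gd_cocoercive (h : E → ℝ) (G : E → E) (M : ℝ) (hM : 0 ≤ M)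
    (hconv : ∀ x y, h x + ⟪G x, y - x⟫ ≤ h y)
    (hsmooth : ∀ x y, h y ≤ h x + ⟪G x, y - x⟫ + M / 2 * ‖y - x‖ ^ 2) (x y : E) :
    ‖G x - G y‖ ^ 2 ≤ M * ⟪G x - G y, x - y⟫ ∧ 0 ≤ ⟪G x - G y, x - y⟫ := by
  have key : ∀ (a b : E) (t : ℝ), h a + ⟪G a, b - a⟫ + t * ‖G b - G a‖ ^ 2
      - M * t ^ 2 / 2 * ‖G b - G a‖ ^ 2 ≤ h b := by
    intro a b t
    set v := G b - G a with hv
    have h1 := hconv a (b - t • v)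
    have h2 := hsmooth b (b - t • v)
    have e1 : ⟪G a, b - t • v - a⟫ = ⟪G a, b - a⟫ - t * ⟪G a, v⟫ := by
      rw [show b - t • v - a = (b - a) - t • v by abel, inner_sub_right, real_inner_smul_right]
    have e2 : ⟪G b, b - t • v - b⟫ = - (t * ⟪G b, v⟫) := by
      rw [show b - t • v - b = -(t • v) by abel, inner_neg_right, real_inner_smul_right]
    have e3 : ‖b - t • v - b‖ ^ 2 = t ^ 2 * ‖v‖ ^ 2 := by
      rw [show b - t • v - b = -(t • v) by abel, norm_neg, norm_smul, Real.norm_eq_abs,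
        mul_pow, sq_abs]
    have e4 : t * ⟪G b, v⟫ - t * ⟪G a, v⟫ = t * ‖v‖ ^ 2 := by
      rw [← mul_sub, ← inner_sub_left, ← hv, real_inner_self_eq_norm_sq]
    rw [e1] at h1
    rw [e2, e3] at h2
    linarith [h1, h2, e4]
  have e7 : ‖G y - G x‖ = ‖G x - G y‖ := norm_sub_rev _ _
  have sum : ∀ t : ℝ, (2 * t - M * t ^ 2) * ‖G x - G y‖ ^ 2 ≤ ⟪G x - G y, x - y⟫ := by
    intro t
    have k1 := key x y t
    have k2 := key y x t
    rw [e7] at k1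
    have e6 : ⟪G x, y - x⟫ + ⟪G y, x - y⟫ = - ⟪G x - G y, x - y⟫ := by
      rw [inner_sub_left]
      have : ⟪G x, y - x⟫ = - ⟪G x, x - y⟫ := by
        rw [← inner_neg_right]; congr 1; abel
      rw [this]; ring
    nlinarith [k1, k2, e6]
  refine ⟨?_, by simpa using sum 0⟩
  rcases eq_or_lt_of_le hM with hM0 | hMpos
  · rw [← hM0]
    by_contra hc
    push_neg at hc
    have hupos : 0 < ‖G x - G y‖ ^ 2 := by nlinarith [hc]
    set s := ⟪G x - G y, x - y⟫ with hsdef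
    set c := (s + 1) / (2 * ‖G x - G y‖ ^ 2) with hcdef
    have hs := sum c
    rw [← hM0] at hs
    have h2 : (2 * c - 0 * c ^ 2) * ‖G x - G y‖ ^ 2 = s + 1 := by
      rw [hcdef, zero_mul, sub_zero, mul_div_assoc', div_mul_eq_mul_div, div_eq_iff (mul_pos two_pos hupos).ne']; ring
    rw [h2] at hs
    linarith
  · have hs := sum (1 / M)
    have e8 : (2 * (1/M) - M * (1/M) ^ 2) = 1 / M := by field_simp; ring
    rw [e8, div_mul_eq_mul_div, one_mul, div_le_iff₀ hMpos] at hs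
    linarith

lemma gd_smooth (f : E → ℝ) (g : E → E) (hdiff : ∀ x, HasGradientAt f (g x) x)
    (L : ℝ) (hL : 0 ≤ L) (hlip : ∀ x y, ‖g x - g y‖ ≤ L * ‖x - y‖) (x y : E) :
    f y ≤ f x + ⟪g x, y - x⟫ + L / 2 * ‖y - x‖ ^ 2 := by
  set d := y - x with hd
  have hγ : ∀ t : ℝ, HasDerivAt (fun s : ℝ => x + s • d) d t := by
    intro t
    simpa using ((hasDerivAt_id t).smul_const d).const_add x
  have hφ : ∀ t : ℝ, HasDerivAt (fun s : ℝ => f (x + s • d)) ⟪g (x + t • d), d⟫ t := by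
    intro t
    have := ((hdiff (x + t • d)).hasFDerivAt.comp_hasDerivAt t (hγ t))
    simpa [InnerProductSpace.toDual_apply_apply, Function.comp_def] using this
  have hgcont : Continuous g := by
    have : LipschitzWith (Real.toNNReal L) g := by
      apply LipschitzWith.of_dist_le_mul
      intro a b
      simpa [dist_eq_norm, Real.coe_toNNReal _ hL] using hlip a b
    exact this.continuous
  have hψcont : Continuous fun t : ℝ => ⟪g (x + t • d), d⟫ := by
    apply Continuous.inner
    · exact hgcont.comp (by continuity)
    · exact continuous_const
  have hint : IntervalIntegrable (fun t : ℝ => ⟪g (x + t • d), d⟫) MeasureTheory.volume 0 1 :=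
    hψcont.intervalIntegrable 0 1
  have hFTC : ∫ t in (0:ℝ)..1, ⟪g (x + t • d), d⟫ = f y - f x := by
    have := intervalIntegral.integral_eq_sub_of_hasDerivAt
      (f := fun s : ℝ => f (x + s • d)) (f' := fun t => ⟪g (x + t • d), d⟫)
      (fun t _ => hφ t) hint
    simpa [hd] using this
  have hbound : ∫ t in (0:ℝ)..1, ⟪g (x + t • d), d⟫
      ≤ ⟪g x, d⟫ + L / 2 * ‖d‖ ^ 2 := by
    have h1 : ∫ t in (0:ℝ)..1, ⟪g (x + t • d), d⟫
        ≤ ∫ t in (0:ℝ)..1, (⟪g x, d⟫ + (L * ‖d‖ ^ 2) * t) := by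
      apply intervalIntegral.integral_mono_on (by norm_num) hint
      · exact (Continuous.intervalIntegrable (by continuity) 0 1)
      · intro t ht
        have h2 : ⟪g (x + t • d), d⟫ - ⟪g x, d⟫ = ⟪g (x + t • d) - g x, d⟫ := by
          rw [inner_sub_left]
        have h3 : ⟪g (x + t • d) - g x, d⟫ ≤ ‖g (x + t • d) - g x‖ * ‖d‖ :=
          real_inner_le_norm _ _
        have h4 : ‖g (x + t • d) - g x‖ ≤ L * ‖t • d‖ := by
          simpa using hlip (x + t • d) x
        have h5 : ‖t • d‖ = t * ‖d‖ := by
          rw [norm_smul, Real.norm_eq_abs, abs_of_nonneg ht.1]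
        nlinarith [norm_nonneg d, norm_nonneg (g (x + t • d) - g x), mul_nonneg hL (norm_nonneg d)]
    have h6 : ∫ t in (0:ℝ)..1, (⟪g x, d⟫ + (L * ‖d‖ ^ 2) * t)
        = ⟪g x, d⟫ + L / 2 * ‖d‖ ^ 2 := by
      rw [intervalIntegral.integral_add intervalIntegrable_const
        ((continuous_mul_left (L * ‖d‖ ^ 2)).intervalIntegrable 0 1)]
      rw [intervalIntegral.integral_const, intervalIntegral.integral_const_mul,
        integral_id]
      norm_num
      ring
    linarith [h1, le_of_eq h6]
  linarith [hFTC ▸ hbound]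

set_option maxHeartbeats 1000000 in
lemma gd_contract (f : E → ℝ) (g : E → E) (hdiff : ∀ x, HasGradientAt f (g x) x)
    (μ L : ℝ) (hμ : 0 < μ) (hμL : μ ≤ L)
    (hsc : ∀ x y, f y ≥ f x + ⟪g x, y - x⟫ + (μ / 2) * ‖y - x‖ ^ 2)
    (hlip : ∀ x y, ‖g x - g y‖ ≤ L * ‖x - y‖)
    (η : ℝ) (hη0 : 0 < η) (hη2 : η * L < 2) (x y : E) :
    ‖(x - η • g x) - (y - η • g y)‖ ≤ max |1 - η * μ| |1 - η * L| * ‖x - y‖ := by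
  have hL : 0 < L := lt_of_lt_of_le hμ hμL
  have smo := gd_smooth f g hdiff L hL.le hlip
  have einner : ∀ (c : ℝ) (a b : E), ⟪g a - c • a, b - a⟫ = ⟪g a, b - a⟫ - c * ⟪a, b - a⟫ := by
    intro c a b; rw [inner_sub_left, real_inner_smul_left]
  have enorm : ∀ a b : E, ‖b - a‖ ^ 2 = ‖b‖ ^ 2 - ‖a‖ ^ 2 - 2 * ⟪a, b - a⟫ := by
    intro a b
    rw [norm_sub_sq_real, inner_sub_right, real_inner_self_eq_norm_sq, real_inner_comm]
    ring
  have conv1 : ∀ a b, (fun z => f z - μ / 2 * ‖z‖ ^ 2) a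
      + ⟪(fun z => g z - μ • z) a, b - a⟫ ≤ (fun z => f z - μ / 2 * ‖z‖ ^ 2) b := by
    intro a b
    have h := hsc a b
    have e := einner μ a b
    rw [enorm a b] at h
    simp only
    rw [e]
    linarith
  have smooth1 : ∀ a b, (fun z => f z - μ / 2 * ‖z‖ ^ 2) b
      ≤ (fun z => f z - μ / 2 * ‖z‖ ^ 2) a + ⟪(fun z => g z - μ • z) a, b - a⟫
        + (L - μ) / 2 * ‖b - a‖ ^ 2 := by
    intro a b
    have h := smo a b
    have e := einner μ a b
    rw [enorm a b] at h
    simp only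
    rw [e, enorm a b]
    linarith
  have einner2 : ∀ (a b : E), ⟪L • a - g a, b - a⟫ = L * ⟪a, b - a⟫ - ⟪g a, b - a⟫ := by
    intro a b; rw [inner_sub_left, real_inner_smul_left]
  have conv2 : ∀ a b, (fun z => L / 2 * ‖z‖ ^ 2 - f z) a
      + ⟪(fun z => L • z - g z) a, b - a⟫ ≤ (fun z => L / 2 * ‖z‖ ^ 2 - f z) b := by
    intro a b
    have h := smo a b
    have e := einner2 a b
    rw [enorm a b] at h
    simp only
    rw [e]
    linarith
  have smooth2 : ∀ a b, (fun z => L / 2 * ‖z‖ ^ 2 - f z) b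
      ≤ (fun z => L / 2 * ‖z‖ ^ 2 - f z) a + ⟪(fun z => L • z - g z) a, b - a⟫
        + (L - μ) / 2 * ‖b - a‖ ^ 2 := by
    intro a b
    have h := hsc a b
    have e := einner2 a b
    rw [enorm a b] at h
    simp only
    rw [e, enorm a b]
    linarith
  have co1 := gd_cocoercive _ _ (L - μ) (by linarith) conv1 smooth1 x y
  have co2 := gd_cocoercive _ _ (L - μ) (by linarith) conv2 smooth2 x y
  set w := x - y with hw
  set ρ := max |1 - η * μ| |1 - η * L| with hρ
  have hρ0 : 0 ≤ ρ := le_trans (abs_nonneg _) (le_max_left _ _)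
  have hsq : ‖(x - η • g x) - (y - η • g y)‖ ^ 2 ≤ (ρ * ‖w‖) ^ 2 := by
    rcases le_or_gt (η * (μ + L)) 2 with hcase | hcase
    · -- ρ₁ = 1 - η μ case
      set p := (g x - μ • x) - (g y - μ • y) with hp
      have hd : (x - η • g x) - (y - η • g y) = (1 - η * μ) • w + η • (-p) := by
        rw [hp, hw]; module
      have hexp : ‖(1 - η * μ) • w + η • (-p)‖ ^ 2
          = (1 - η * μ) ^ 2 * ‖w‖ ^ 2 + 2 * (1 - η * μ) * η * ⟪w, -p⟫ + η ^ 2 * ‖p‖ ^ 2 := by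
        rw [norm_add_sq_real, norm_smul, norm_smul, real_inner_smul_left, real_inner_smul_right,
          norm_neg]
        simp only [Real.norm_eq_abs, mul_pow, sq_abs]
        ring
      have hip : ⟪w, -p⟫ = - ⟪p, w⟫ := by
        rw [inner_neg_right, real_inner_comm]
      have hcs : ‖p‖ ^ 2 ≤ (L - μ) * ⟪p, w⟫ := co1.1
      have hs0 : 0 ≤ ⟪p, w⟫ := co1.2
      have h1μ : 0 ≤ 1 - η * μ := by nlinarith
      have habs : |1 - η * μ| ≤ ρ := le_max_left _ _
      rw [hd, hexp, hip]
      have h2 : (1 - η * μ) ^ 2 ≤ ρ ^ 2 := by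
        rw [← sq_abs (1 - η * μ)]
        exact pow_le_pow_left₀ (abs_nonneg _) habs 2
      have t1 : η ^ 2 * ‖p‖ ^ 2 ≤ η ^ 2 * ((L - μ) * ⟪p, w⟫) :=
        mul_le_mul_of_nonneg_left hcs (sq_nonneg η)
      have t2 : η * (η * (μ + L) - 2) * ⟪p, w⟫ ≤ 0 :=
        mul_nonpos_of_nonpos_of_nonneg
          (mul_nonpos_of_nonneg_of_nonpos hη0.le (by linarith)) hs0
      have t3 : (1 - η * μ) ^ 2 * ‖w‖ ^ 2 ≤ ρ ^ 2 * ‖w‖ ^ 2 :=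
        mul_le_mul_of_nonneg_right h2 (sq_nonneg ‖w‖)
      nlinarith [t1, t2, t3]
    · -- ρ₂ = η L - 1 case
      set q := (L • x - g x) - (L • y - g y) with hq
      have hd : (x - η • g x) - (y - η • g y) = (1 - η * L) • w + η • q := by
        rw [hq, hw]; module
      have hexp : ‖(1 - η * L) • w + η • q‖ ^ 2
          = (1 - η * L) ^ 2 * ‖w‖ ^ 2 + 2 * (1 - η * L) * η * ⟪w, q⟫ + η ^ 2 * ‖q‖ ^ 2 := by
        rw [norm_add_sq_real, norm_smul, norm_smul, real_inner_smul_left, real_inner_smul_right]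
        simp only [Real.norm_eq_abs, mul_pow, sq_abs]
        ring
      have hip : ⟪w, q⟫ = ⟪q, w⟫ := real_inner_comm _ _
      have hcs : ‖q‖ ^ 2 ≤ (L - μ) * ⟪q, w⟫ := co2.1
      have hs0 : 0 ≤ ⟪q, w⟫ := co2.2
      have h1L : 1 - η * L ≤ 0 := by nlinarith
      have habs : |1 - η * L| ≤ ρ := le_max_right _ _
      rw [hd, hexp, hip]
      have h2 : (1 - η * L) ^ 2 ≤ ρ ^ 2 := by
        rw [← sq_abs (1 - η * L)]
        exact pow_le_pow_left₀ (abs_nonneg _) habs 2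
      have t1 : η ^ 2 * ‖q‖ ^ 2 ≤ η ^ 2 * ((L - μ) * ⟪q, w⟫) :=
        mul_le_mul_of_nonneg_left hcs (sq_nonneg η)
      have t2 : 0 ≤ η * (η * (μ + L) - 2) * ⟪q, w⟫ :=
        mul_nonneg (mul_nonneg hη0.le (by linarith)) hs0
      have t3 : (1 - η * L) ^ 2 * ‖w‖ ^ 2 ≤ ρ ^ 2 * ‖w‖ ^ 2 :=
        mul_le_mul_of_nonneg_right h2 (sq_nonneg ‖w‖)
      nlinarith [t1, t2, t3]
  nlinarith [hsq, norm_nonneg ((x - η • g x) - (y - η • g y)), mul_nonneg hρ0 (norm_nonneg w)]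

/-- Gradient descent on a `μ`-strongly convex function with `L`-Lipschitz gradient
and step size `η ∈ (0, 2/L)` contracts with rate `ρ = max |1-ημ| |1-ηL| < 1`,
hence converges to the minimizer `θ*`. -/
theorem stmt_8 {m : ℕ} (f : EuclideanSpace ℝ (Fin m) → ℝ)
    (g : EuclideanSpace ℝ (Fin m) → EuclideanSpace ℝ (Fin m))
    (hdiff : ∀ x, HasGradientAt f (g x) x)
    (μ L : ℝ) (hμ : 0 < μ) (hμL : μ ≤ L)
    (hsc : ∀ x y, f y ≥ f x + ⟪g x, y - x⟫ + (μ / 2) * ‖y - x‖ ^ 2)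
    (hlip : ∀ x y, ‖g x - g y‖ ≤ L * ‖x - y‖)
    (θstar : EuclideanSpace ℝ (Fin m)) (hmin : ∀ θ, f θstar ≤ f θ)
    (hgrad : g θstar = 0)
    (η : ℝ) (hη : η ∈ Set.Ioo (0 : ℝ) (2 / L))
    (θ : ℕ → EuclideanSpace ℝ (Fin m))
    (hiter : ∀ t, θ (t + 1) = θ t - η • g (θ t)) :
    (∀ t, ‖θ (t + 1) - θstar‖ ≤ max |1 - η * μ| |1 - η * L| * ‖θ t - θstar‖) ∧
      max |1 - η * μ| |1 - η * L| < 1 ∧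
      Tendsto θ atTop (nhds θstar) := by
  have hL : 0 < L := lt_of_lt_of_le hμ hμL
  have hη0 : 0 < η := hη.1
  have hη2 : η * L < 2 := by
    have := (lt_div_iff₀ hL).mp hη.2
    linarith
  set ρ := max |1 - η * μ| |1 - η * L| with hρ
  have hρ0 : 0 ≤ ρ := le_trans (abs_nonneg _) (le_max_left _ _)
  have hcontr : ∀ t, ‖θ (t + 1) - θstar‖ ≤ ρ * ‖θ t - θstar‖ := by
    intro t
    have h := gd_contract f g hdiff μ L hμ hμL hsc hlip η hη0 hη2 (θ t) θstar
    rw [hgrad] at h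
    simpa [hiter t] using h
  have hρ1 : ρ < 1 := by
    have h1 : |1 - η * μ| < 1 := by
      rw [abs_lt]
      constructor
      · nlinarith
      · nlinarith
    have h2 : |1 - η * L| < 1 := by
      rw [abs_lt]
      constructor
      · linarith
      · nlinarith
    exact max_lt h1 h2
  refine ⟨hcontr, hρ1, ?_⟩
  have hub : ∀ t, ‖θ t - θstar‖ ≤ ρ ^ t * ‖θ 0 - θstar‖ := by
    intro t
    induction t with
    | zero => simp
    | succ n ih =>
      calc ‖θ (n + 1) - θstar‖ ≤ ρ * ‖θ n - θstar‖ := hcontr n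
        _ ≤ ρ * (ρ ^ n * ‖θ 0 - θstar‖) := mul_le_mul_of_nonneg_left ih hρ0
        _ = ρ ^ (n + 1) * ‖θ 0 - θstar‖ := by ring
  have hgeo : Tendsto (fun t : ℕ => ρ ^ t * ‖θ 0 - θstar‖) atTop (𝓝 0) := by
    have := (tendsto_pow_atTop_nhds_zero_of_lt_one hρ0 hρ1).mul_const ‖θ 0 - θstar‖
    simpa using this
  rw [tendsto_iff_norm_sub_tendsto_zero]
  exact squeeze_zero (fun t => norm_nonneg _) hub hgeo
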